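/- Let G be a finite simple graph and S ⊆ V(G) an independent set of G, with G^S its S-suspension (new vertex x_0). Let J = (x_0 x_i : x_i ∈ V(G) \ S). Then for every k ≥ 1, the set of minimal monomial generators of I(G^S)^k is the disjoint union of the minimal monomial generators of I(G)^k and those of J·I(G^S)^{k-1}. -/

import Mathlib

open MvPolynomial

/-- The `S`-suspension of `G`: add a new vertex (`none`) joined to every vertex of
`V(G) \ S`. -/
def suspension {V : Type*} (G : SimpleGraph V) (S : Set V) : SimpleGraph (Option V) :=
  SimpleGraph.fromRel (fun a b =>
    match a, b with
    | some x, some y => G.Adj x y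
    | some x, none => x ∉ S
    | _, _ => False)

/-- The edge ideal of a graph `G` in `K[x_v : v ∈ V]`. -/
noncomputable def edgeIdeal {V K : Type*} [Field K] (G : SimpleGraph V) : Ideal (MvPolynomial V K) :=
  Ideal.span {p | ∃ i j : V, G.Adj i j ∧ p = X i * X j}

/-- The set of (exponent vectors of) minimal monomial generators of a monomial ideal `I`:
monomials of `I` not divisible by any other monomial of `I`. -/
def minGens {V K : Type*} [Field K] (I : Ideal (MvPolynomial V K)) : Set (V →₀ ℕ) :=
  {d | monomial d (1 : K) ∈ I ∧ ∀ d' : V →₀ ℕ, d' ≤ d → d' ≠ d → monomial d' (1 : K) ∉ I}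

open Pointwise

section Aux

variable {α : Type*} {K : Type*} [Field K]

lemma deg_add (a b : α →₀ ℕ) : Finsupp.degree (a+b) = Finsupp.degree a + Finsupp.degree b := by
  simp [Finsupp.degree_eq_weight_one, map_add]

lemma deg_single (a : α) (n : ℕ) : Finsupp.degree (Finsupp.single a n) = n := by
  classical
  rcases eq_or_ne n 0 with rfl | h
  · simp
  · simp [Finsupp.degree_apply, Finsupp.support_single_ne_zero _ h]

lemma eq_of_le_of_deg_eq {f g : α →₀ ℕ} (h : f ≤ g)
    (hd : Finsupp.degree f = Finsupp.degree g) : f = g := by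
  have h1 : f + (g - f) = g := add_tsub_cancel_of_le h
  have h2 : Finsupp.degree (g - f) = 0 := by
    have := deg_add f (g - f)
    rw [h1, ← hd] at this
    omega
  rw [Finsupp.degree_eq_zero_iff] at h2
  rw [← h1, h2, add_zero]

lemma Xmul (i j : α) : (X i * X j : MvPolynomial α K)
    = monomial (Finsupp.single i 1 + Finsupp.single j 1) 1 := by
  show monomial _ 1 * monomial _ 1 = _
  rw [monomial_mul, one_mul]

lemma mem_span_mono {D : Set (α →₀ ℕ)} {d : α →₀ ℕ} :
    monomial d (1:K) ∈ Ideal.span ((fun e => monomial e (1:K)) '' D) ↔ ∃ e ∈ D, e ≤ d := by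
  rw [mem_ideal_span_monomial_image]
  constructor
  · intro h
    classical
    exact h d (by simp [mem_support_iff, coeff_monomial])
  · rintro he xi hxi
    have hx : xi = d := by
      classical
      simpa [support_monomial] using hxi
    exact hx ▸ he

/-- `k`-fold pointwise sumset. -/
def sumPow (A : Set (α →₀ ℕ)) : ℕ → Set (α →₀ ℕ)
  | 0 => {0}
  | n+1 => A + sumPow A n

lemma image_add (A B : Set (α →₀ ℕ)) :
    (fun e => monomial e (1:K)) '' (A + B)
      = ((fun e => monomial e (1:K)) '' A) * ((fun e => monomial e (1:K)) '' B) := by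
  ext p
  simp only [Set.mem_image, Set.mem_add, Set.mem_mul]
  constructor
  · rintro ⟨d, ⟨a, ha, b, hb, rfl⟩, rfl⟩
    exact ⟨_, ⟨a, ha, rfl⟩, _, ⟨b, hb, rfl⟩, by rw [monomial_mul, one_mul]⟩
  · rintro ⟨_, ⟨a, ha, rfl⟩, _, ⟨b, hb, rfl⟩, rfl⟩
    exact ⟨a + b, ⟨a, ha, b, hb, rfl⟩, by rw [monomial_mul, one_mul]⟩

lemma span_sumPow (A : Set (α →₀ ℕ)) (k : ℕ) :
    (Ideal.span ((fun e => monomial e (1:K)) '' A)) ^ k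
      = Ideal.span ((fun e => monomial e (1:K)) '' sumPow A k) := by
  induction k with
  | zero =>
      simp only [pow_zero, sumPow, Set.image_singleton, Ideal.one_eq_top]
      rw [show (monomial (0 : α →₀ ℕ) (1:K)) = 1 by simp [monomial_zero'],
        Ideal.span_singleton_one]
  | succ n ih =>
      rw [pow_succ', ih, Ideal.span_mul_span', ← image_add]
      rfl

lemma minGens_span (D : Set (α →₀ ℕ)) :
    minGens (Ideal.span ((fun e => monomial e (1:K)) '' D))
      = {d | d ∈ D ∧ ∀ e ∈ D, e ≤ d → e = d} := by
  ext d
  simp only [minGens, Set.mem_setOf_eq, mem_span_mono]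
  constructor
  · rintro ⟨⟨e, heD, hed⟩, hmin⟩
    have hed' : e = d := by
      by_contra hne
      exact hmin e hed hne ⟨e, heD, le_refl e⟩
    subst hed'
    refine ⟨heD, fun e' he' hle => ?_⟩
    by_contra hne
    exact hmin e' hle hne ⟨e', he', le_refl e'⟩
  · rintro ⟨hD, hmin⟩
    refine ⟨⟨d, hD, le_refl d⟩, fun d' hle hne h => ?_⟩
    obtain ⟨e, heD, hed'⟩ := h
    have : e = d := hmin e heD (hed'.trans hle)
    exact hne (le_antisymm hle (this ▸ hed'))

lemma sumPow_one (A : Set (α →₀ ℕ)) : sumPow A 1 = A := by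
  ext x
  simp [sumPow, Set.mem_add]

lemma sumPow_mono {A B : Set (α →₀ ℕ)} (h : A ⊆ B) : ∀ k, sumPow A k ⊆ sumPow B k := by
  intro k
  induction k with
  | zero => exact le_refl _
  | succ n ih => exact Set.add_subset_add h ih

lemma sumPow_union_subset (A B : Set (α →₀ ℕ)) (n : ℕ) :
    sumPow (A ∪ B) (n+1) ⊆ sumPow A (n+1) ∪ (B + sumPow (A ∪ B) n) := by
  induction n with
  | zero =>
      rw [sumPow_one]
      rintro x (hx | hx)
      · exact Or.inl (by rw [sumPow_one]; exact hx)
      · exact Or.inr ⟨x, hx, 0, rfl, add_zero x⟩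
  | succ n ih =>
      rintro e ⟨x, hx, y, hy, rfl⟩
      rcases hx with hx | hx
      · rcases ih hy with hy' | hy'
        · exact Or.inl ⟨x, hx, y, hy', rfl⟩
        · obtain ⟨b, hb, z, hz, rfl⟩ := hy'
          refine Or.inr ⟨b, hb, x + z, ⟨x, Or.inl hx, z, hz, rfl⟩, ?_⟩
          exact (add_left_comm x b z).symm
      · exact Or.inr ⟨x, hx, y, hy, rfl⟩

lemma sumPow_union (A B : Set (α →₀ ℕ)) (n : ℕ) :
    sumPow (A ∪ B) (n+1) = sumPow A (n+1) ∪ (B + sumPow (A ∪ B) n) := by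
  apply Set.Subset.antisymm (sumPow_union_subset A B n)
  apply Set.union_subset
  · exact sumPow_mono Set.subset_union_left (n+1)
  · exact Set.add_subset_add Set.subset_union_right (le_refl _)

lemma sumPow_forall {A : Set (α →₀ ℕ)} {P : (α →₀ ℕ) → Prop} (h0 : P 0)
    (hadd : ∀ a ∈ A, ∀ b, P b → P (a + b)) : ∀ k, ∀ e ∈ sumPow A k, P e := by
  intro k
  induction k with
  | zero => rintro e rfl; exact h0
  | succ n ih =>
      rintro e ⟨a, ha, b, hb, rfl⟩
      exact hadd a ha b (ih b hb)

lemma sumPow_deg {A : Set (α →₀ ℕ)} (h : ∀ e ∈ A, Finsupp.degree e = 2) :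
    ∀ k, ∀ e ∈ sumPow A k, Finsupp.degree e = 2 * k := by
  intro k
  induction k with
  | zero => rintro e rfl; simp
  | succ n ih =>
      rintro e ⟨a, ha, b, hb, rfl⟩
      rw [deg_add, h a ha, ih b hb]
      ring

/-- Generic splitting of minimal elements of a union of sets of exponent vectors all of
the same degree. -/
lemma min_split {A B : Set (α →₀ ℕ)} (N : ℕ)
    (hd : ∀ e ∈ A ∪ B, Finsupp.degree e = N) (hAB : Disjoint A B) :
    ({d | d ∈ A ∪ B ∧ ∀ e ∈ A ∪ B, e ≤ d → e = d}
        = {d | d ∈ A ∧ ∀ e ∈ A, e ≤ d → e = d} ∪ {d | d ∈ B ∧ ∀ e ∈ B, e ≤ d → e = d})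
      ∧ Disjoint {d | d ∈ A ∧ ∀ e ∈ A, e ≤ d → e = d}
          {d | d ∈ B ∧ ∀ e ∈ B, e ≤ d → e = d} := by
  constructor
  · ext d
    simp only [Set.mem_setOf_eq, Set.mem_union]
    constructor
    · rintro ⟨hd', hmin⟩
      rcases hd' with h | h
      · exact Or.inl ⟨h, fun e he hle => hmin e (Or.inl he) hle⟩
      · exact Or.inr ⟨h, fun e he hle => hmin e (Or.inr he) hle⟩
    · rintro (⟨h, _⟩ | ⟨h, _⟩)
      · exact ⟨Or.inl h, fun e he hle =>
          eq_of_le_of_deg_eq hle (by rw [hd e he, hd d (Or.inl h)])⟩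
      · exact ⟨Or.inr h, fun e he hle =>
          eq_of_le_of_deg_eq hle (by rw [hd e he, hd d (Or.inr h)])⟩
  · rw [Set.disjoint_left]
    rintro d ⟨hdA, _⟩ ⟨hdB, _⟩
    exact Set.disjoint_left.mp hAB hdA hdB

end Aux

section Graph

variable {V : Type*} (G : SimpleGraph V) (S : Set V)

/-- Exponent vectors of the generators of the edge ideal of `G` inside `K[x₀, x_v]`. -/
def EG : Set (Option V →₀ ℕ) :=
  {d | ∃ i j : V, G.Adj i j ∧ d = Finsupp.single (some i) 1 + Finsupp.single (some j) 1}

/-- Exponent vectors of the generators of `J`. -/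
def EJ : Set (Option V →₀ ℕ) :=
  {d | ∃ i : V, i ∉ S ∧ d = Finsupp.single (none : Option V) 1 + Finsupp.single (some i) 1}

/-- Exponent vectors of the generators of the edge ideal of the suspension. -/
def ES : Set (Option V →₀ ℕ) :=
  {d | ∃ a b : Option V, (suspension G S).Adj a b ∧ d = Finsupp.single a 1 + Finsupp.single b 1}

lemma ES_eq : ES G S = EG G ∪ EJ S := by
  ext d
  constructor
  · rintro ⟨a, b, hab, rfl⟩
    rw [suspension, SimpleGraph.fromRel_adj] at hab
    obtain ⟨hne, h⟩ := hab
    rcases a with _ | x <;> rcases b with _ | y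
    · exact ((h.elim id id).elim)
    · rcases h with h | h
      · exact h.elim
      · exact Or.inr ⟨y, h, rfl⟩
    · rcases h with h | h
      · exact Or.inr ⟨x, h, add_comm _ _⟩
      · exact h.elim
    · rcases h with h | h
      · exact Or.inl ⟨x, y, h, rfl⟩
      · exact Or.inl ⟨y, x, h, add_comm _ _⟩
  · rintro (⟨i, j, hij, rfl⟩ | ⟨i, hi, rfl⟩)
    · refine ⟨some i, some j, ?_, rfl⟩
      rw [suspension, SimpleGraph.fromRel_adj]
      exact ⟨by simpa using hij.ne, Or.inl hij⟩
    · refine ⟨none, some i, ?_, rfl⟩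
      rw [suspension, SimpleGraph.fromRel_adj]
      exact ⟨by simp, Or.inr hi⟩

lemma EG_none : ∀ e ∈ EG G, e none = 0 := by
  rintro e ⟨i, j, _, rfl⟩
  simp [Finsupp.single_apply]

lemma EG_deg : ∀ e ∈ EG G, Finsupp.degree e = 2 := by
  rintro e ⟨i, j, _, rfl⟩
  rw [deg_add, deg_single, deg_single]

lemma EJ_none : ∀ e ∈ EJ S (V := V), 1 ≤ e none := by
  rintro e ⟨i, _, rfl⟩
  simp [Finsupp.single_apply]

lemma EJ_deg : ∀ e ∈ EJ S (V := V), Finsupp.degree e = 2 := by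
  rintro e ⟨i, _, rfl⟩
  rw [deg_add, deg_single, deg_single]

lemma ES_deg : ∀ e ∈ ES G S, Finsupp.degree e = 2 := by
  rw [ES_eq]
  rintro e (he | he)
  · exact EG_deg G e he
  · exact EJ_deg S e he

end Graph

theorem minGens_pow_suspension_split {V K : Type*} [Field K]
    (G : SimpleGraph V) (S : Set V) (hS : ∀ x ∈ S, ∀ y ∈ S, ¬ G.Adj x y) (k : ℕ)
    (hk : 1 ≤ k) :
    -- `IG` is the edge ideal of `G` viewed in the ring of `G^S`, `J = (x₀ xᵢ : xᵢ ∉ S)`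
    ∀ IG J : Ideal (MvPolynomial (Option V) K),
      IG = Ideal.span {p | ∃ i j : V, G.Adj i j ∧ p = X (some i) * X (some j)} →
      J = Ideal.span {p | ∃ i : V, i ∉ S ∧ p = X (none : Option V) * X (some i)} →
      minGens ((edgeIdeal (suspension G S) (K := K)) ^ k)
          = minGens (IG ^ k) ∪ minGens (J * (edgeIdeal (suspension G S) (K := K)) ^ (k - 1))
        ∧ Disjoint (minGens (IG ^ k))
            (minGens (J * (edgeIdeal (suspension G S) (K := K)) ^ (k - 1))) := by
  intro IG J hIG hJ
  obtain ⟨n, rfl⟩ : ∃ n, k = n + 1 := ⟨k - 1, (Nat.succ_pred_eq_of_pos hk).symm⟩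
  -- rewrite the three ideals as monomial ideals
  have himgG : {p | ∃ i j : V, G.Adj i j ∧ p = X (some i) * X (some j)}
      = (fun e => monomial e (1:K)) '' EG G := by
    ext p
    constructor
    · rintro ⟨i, j, h, rfl⟩
      exact ⟨_, ⟨i, j, h, rfl⟩, (Xmul _ _).symm⟩
    · rintro ⟨e, ⟨i, j, h, rfl⟩, rfl⟩
      exact ⟨i, j, h, (Xmul _ _).symm⟩
  have himgJ : {p | ∃ i : V, i ∉ S ∧ p = X (none : Option V) * X (some i)}
      = (fun e => monomial e (1:K)) '' EJ S := by
    ext p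
    constructor
    · rintro ⟨i, h, rfl⟩
      exact ⟨_, ⟨i, h, rfl⟩, (Xmul _ _).symm⟩
    · rintro ⟨e, ⟨i, h, rfl⟩, rfl⟩
      exact ⟨i, h, (Xmul _ _).symm⟩
  have hE : edgeIdeal (suspension G S) (K := K)
      = Ideal.span ((fun e => monomial e (1:K)) '' ES G S) := by
    rw [edgeIdeal]
    congr 1
    ext p
    constructor
    · rintro ⟨a, b, h, rfl⟩
      exact ⟨_, ⟨a, b, h, rfl⟩, (Xmul _ _).symm⟩
    · rintro ⟨e, ⟨a, b, h, rfl⟩, rfl⟩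
      exact ⟨a, b, h, (Xmul _ _).symm⟩
  rw [hIG, hJ, himgG, himgJ, hE, span_sumPow, span_sumPow, span_sumPow,
    Ideal.span_mul_span', ← image_add, minGens_span, minGens_span, minGens_span]
  simp only [Nat.add_sub_cancel]
  -- the decomposition of the exponent sets
  have hDk : sumPow (ES G S) (n+1) = sumPow (EG G) (n+1) ∪ (EJ S + sumPow (ES G S) n) := by
    rw [ES_eq, sumPow_union, ← ES_eq]
  rw [hDk]
  -- degree and `x₀`-exponent facts
  have hdA : ∀ e ∈ sumPow (EG G) (n+1), Finsupp.degree e = 2 * (n+1) :=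
    sumPow_deg (EG_deg G) (n+1)
  have hdB : ∀ e ∈ EJ S + sumPow (ES G S) n, Finsupp.degree e = 2 * (n+1) := by
    rintro e ⟨a, ha, b, hb, rfl⟩
    rw [deg_add, EJ_deg S a ha, sumPow_deg (ES_deg G S) n b hb]
    ring
  have hA0 : ∀ e ∈ sumPow (EG G) (n+1), e none = 0 := by
    intro e he
    refine sumPow_forall (P := fun e => e none = 0) (by simp) ?_ (n+1) e he
    intro a ha b hb
    rw [Finsupp.add_apply, EG_none G a ha, hb]
  have hB1 : ∀ e ∈ EJ S + sumPow (ES G S) n, 1 ≤ e none := by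
    rintro e ⟨a, ha, b, hb, rfl⟩
    have := EJ_none S a ha
    rw [Finsupp.add_apply]
    omega
  have hAB : Disjoint (sumPow (EG G) (n+1)) (EJ S + sumPow (ES G S) n) := by
    rw [Set.disjoint_left]
    intro e heA heB
    have h0 := hA0 e heA
    have h1 := hB1 e heB
    omega
  exact min_split (2 * (n+1))
    (by rintro e (he | he); exacts [hdA e he, hdB e he]) hAB
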